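/- For every infinite computably enumerable set A ⊆ ℕ there is a total computable f : ℕ → ℕ such that for all i and x: if there exists a ∈ A with x < a and φ i y defined for all y < a, then φ (f i) x = φ i x; otherwise φ (f i) x is undefined. Consequently: (i) the range of λ i. φ (f i) is exactly S_A, so λ i. φ (f i) is a numbering of S_A; (ii) whenever φ i ∈ S_A one has φ (f i) = φ i; and (iii) graph(φ (f i)) ⊆ graph(φ i) for all i, where graph(q) = {Nat.pair x z | q x = Part.some z}. -/

import Mathlib

/-- `r : ℕ →. ℕ` is an initial-segment function for `A`: its domain is empty or
equals `{m | m < a}` for some `a ∈ A`. -/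
def IsInitSeg (A : Set ℕ) (r : ℕ →. ℕ) : Prop :=
  {x : ℕ | (r x).Dom} = (∅ : Set ℕ) ∨ ∃ a ∈ A, {x : ℕ | (r x).Dom} = {m : ℕ | m < a}

/-- `SA A` is the class of unary partial functions that are either total computable
or initial-segment functions for `A`. -/
def SA (A : Set ℕ) : Set (ℕ →. ℕ) :=
  {r | (∃ f : ℕ → ℕ, Computable f ∧ ∀ x, r x = Part.some (f x)) ∨ IsInitSeg A r}

/-- The extended graph of a unary partial function. -/
def graphE (q : ℕ →. ℕ) : Set ℕ :=
  {n | ∃ y, n = Nat.pair y 0} ∪ {n | ∃ x z, q x = Part.some z ∧ n = Nat.pair x (z + 1)}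

/-- The graph of a unary partial function. -/
def pgraph (q : ℕ →. ℕ) : Set ℕ :=
  {n | ∃ x z, q x = Part.some z ∧ n = Nat.pair x z}

/-- Condition (QGN I): the extended graph of the universal function of `θ` is
enumerated by a total computable function. -/
def QGN1 (θ : ℕ → ℕ →. ℕ) : Prop :=
  ∃ h : ℕ → ℕ, Computable h ∧
    Set.range h = {n | ∃ w, n = Nat.pair w 0} ∪
      {n | ∃ i x z, θ i x = Part.some z ∧ n = Nat.pair (Nat.pair i x) (z + 1)}

/-- Condition (QGN II). -/
def QGN2 (A : Set ℕ) (θ : ℕ → ℕ →. ℕ) : Prop :=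
  ∀ k : ℕ → ℕ → ℕ, Computable₂ k →
    ∃ v : ℕ → ℕ, Computable v ∧
      ∀ i, ∀ r ∈ SA A, Set.range (k i) = graphE r → θ (v i) = r

/-- A quasi-Gödel numbering of `SA A`. -/
def QuasiGodel (A : Set ℕ) (θ : ℕ → ℕ →. ℕ) : Prop :=
  Set.range θ = SA A ∧ QGN1 θ ∧ QGN2 A θ

/-- A set of naturals is computably enumerable. -/
def CEset (C : Set ℕ) : Prop :=
  C = ∅ ∨ ∃ g : ℕ → ℕ, Computable g ∧ C = Set.range g

/-- The standard Gödel numbering of the unary partial recursive functions. -/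
def phi (i : ℕ) : ℕ →. ℕ :=
  Nat.Partrec.Code.eval (Denumerable.ofNat Nat.Partrec.Code i)

open Nat.Partrec Nat.Partrec.Code

lemma band_primrec {α} [Primcodable α] {f g : α → Bool} (hf : Primrec f) (hg : Primrec g) :
    Primrec fun a => f a && g a :=
  (Primrec.cond hf hg (Primrec.const false)).of_eq fun a => by cases f a <;> simp

def allb (c : Code) (s m : ℕ) : Bool :=
  Nat.rec true (fun y b => b && (evaln s c y).isSome) m

lemma allb_iff {c : Code} {s m : ℕ} :
    allb c s m = true ↔ ∀ y < m, (evaln s c y).isSome := by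
  induction m with
  | zero => simp [allb]
  | succ m ih =>
    show (allb c s m && (evaln s c m).isSome) = true ↔ _
    rw [Bool.and_eq_true, ih]
    constructor
    · rintro ⟨h1, h2⟩ y hy
      rcases Nat.lt_succ_iff_lt_or_eq.1 hy with h | rfl
      · exact h1 y h
      · exact h2
    · intro h
      exact ⟨fun y hy => h y (hy.trans (Nat.lt_succ_self m)), h m (Nat.lt_succ_self m)⟩

lemma allb_prim : Primrec fun a : (Code × ℕ) × ℕ => allb a.1.1 a.1.2 a.2 := by
  have h : Primrec₂ fun (a : (Code × ℕ) × ℕ) (p : ℕ × Bool) =>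
      (p.2 && (evaln a.1.2 a.1.1 p.1).isSome) := by
    have he : Primrec fun q : ((Code × ℕ) × ℕ) × ℕ × Bool =>
        (evaln q.1.1.2 q.1.1.1 q.2.1).isSome :=
      Primrec.option_isSome.comp <| primrec_evaln.comp <|
        ((Primrec.snd.comp (Primrec.fst.comp Primrec.fst)).pair
          (Primrec.fst.comp (Primrec.fst.comp Primrec.fst))).pair
          (Primrec.fst.comp Primrec.snd)
    exact (band_primrec (Primrec.snd.comp Primrec.snd) he).to₂
  exact (Primrec.nat_rec' Primrec.snd (Primrec.const true) h)

lemma exists_uniform_stage (c : Code) (m : ℕ) (h : ∀ y < m, (eval c y).Dom) :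
    ∃ s, ∀ y < m, (evaln s c y).isSome := by
  induction m with
  | zero => exact ⟨0, fun y hy => absurd hy (Nat.not_lt_zero y)⟩
  | succ m ih =>
    obtain ⟨s0, hs0⟩ := ih fun y hy => h y (hy.trans (Nat.lt_succ_self m))
    obtain ⟨z, hz⟩ := Part.dom_iff_mem.1 (h m (Nat.lt_succ_self m))
    obtain ⟨s1, hs1⟩ := evaln_complete.1 hz
    refine ⟨max s0 s1, fun y hy => ?_⟩
    rcases Nat.lt_succ_iff_lt_or_eq.1 hy with hy' | rfl
    · obtain ⟨w, hw⟩ := Option.isSome_iff_exists.1 (hs0 y hy')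
      exact Option.isSome_iff_exists.2 ⟨w, evaln_mono (le_max_left _ _) hw⟩
    · exact Option.isSome_iff_exists.2 ⟨z, evaln_mono (le_max_right _ _) hs1⟩

/-- There is a total computable `f` transforming every Gödel index `i` into an index of
the restriction of `phi i` to the maximal initial segment with edge length in `A`
contained in its domain; the resulting enumeration is a special φ-standard numbering
of `SA A`. -/
theorem exists_special_standard_numbering (A : Set ℕ) (hAinf : A.Infinite) (hAce : CEset A) :
    ∃ f : ℕ → ℕ, Computable f ∧
      (∀ i x,
        ((∃ a ∈ A, x < a ∧ ∀ y < a, (phi i y).Dom) → phi (f i) x = phi i x) ∧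
        (¬ (∃ a ∈ A, x < a ∧ ∀ y < a, (phi i y).Dom) → ¬ (phi (f i) x).Dom)) ∧
      Set.range (fun i => phi (f i)) = SA A ∧
      (∀ i, phi i ∈ SA A → phi (f i) = phi i) ∧
      (∀ i, pgraph (phi (f i)) ⊆ pgraph (phi i)) := by
  classical
  obtain ⟨g, hgc, hAg⟩ : ∃ g : ℕ → ℕ, Computable g ∧ A = Set.range g := by
    rcases hAce with h | h
    · exact (hAinf (h ▸ Set.finite_empty)).elim
    · exact h
  -- the search predicate
  set check : ℕ → ℕ → Bool := fun p w =>
    decide (p.unpair.2 < g w.unpair.1) &&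
      allb (Denumerable.ofNat Code p.unpair.1) w.unpair.2 (g w.unpair.1) with hcheckdef
  have hcheckc : Computable₂ check := by
    have h1 : Primrec fun q : (ℕ × ℕ) × ℕ =>
        (decide (q.1.1.unpair.2 < q.2) &&
          allb (Denumerable.ofNat Code q.1.1.unpair.1) q.1.2.unpair.2 q.2) := by
      have ha : Primrec fun q : (ℕ × ℕ) × ℕ => decide (q.1.1.unpair.2 < q.2) :=
        Primrec.nat_lt.decide.comp
          (Primrec.snd.comp (Primrec.unpair.comp (Primrec.fst.comp Primrec.fst))) Primrec.snd
      have hb : Primrec fun q : (ℕ × ℕ) × ℕ =>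
          allb (Denumerable.ofNat Code q.1.1.unpair.1) q.1.2.unpair.2 q.2 :=
        allb_prim.comp
          ((((Primrec.ofNat Code).comp
              (Primrec.fst.comp (Primrec.unpair.comp (Primrec.fst.comp Primrec.fst)))).pair
            (Primrec.snd.comp (Primrec.unpair.comp (Primrec.snd.comp Primrec.fst)))).pair
            Primrec.snd)
      exact band_primrec ha hb
    have h2 : Computable fun p : ℕ × ℕ => g p.2.unpair.1 :=
      hgc.comp (Computable.fst.comp (Primrec.unpair.to_comp.comp Computable.snd))
    exact (h1.to_comp.comp (Computable.id.pair h2)).of_eq fun p => rfl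
  set F : ℕ →. ℕ := fun p =>
    (Nat.rfind fun w => Part.some (check p w)).bind fun _ => phi p.unpair.1 p.unpair.2 with hFdef
  have hFp : Partrec F := by
    have hr : Partrec fun p : ℕ => Nat.rfind fun w => Part.some (check p w) :=
      Partrec.rfind hcheckc.partrec₂
    have hev : Partrec₂ fun (p : ℕ) (_ : ℕ) => phi p.unpair.1 p.unpair.2 :=
      eval_part.comp
        ((Computable.ofNat Code).comp
          (Computable.fst.comp (Primrec.unpair.to_comp.comp Computable.fst)))
        (Computable.snd.comp (Primrec.unpair.to_comp.comp Computable.fst))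
    exact hr.bind hev
  obtain ⟨c, hc⟩ := exists_code.1 (Partrec.nat_iff.1 hFp)
  obtain ⟨sf, hsfc, hsf⟩ := smn
  set f : ℕ → ℕ := fun i => Encodable.encode (sf c i) with hfdef
  have hfc : Computable f :=
    Computable.encode.comp (hsfc.comp (Computable.const c) Computable.id)
  have hfi : ∀ i x, phi (f i) x =
      (Nat.rfind fun w => Part.some (check (Nat.pair i x) w)).bind fun _ => phi i x := by
    intro i x
    show eval (Denumerable.ofNat Code (Encodable.encode (sf c i))) x = _
    rw [Denumerable.ofNat_encode, hsf, hc]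
    show F (Nat.pair i x) = _
    rw [hFdef]
    simp only [Nat.unpair_pair]
  -- the search predicate captures the informal condition
  have hPiff : ∀ i x, (∃ a ∈ A, x < a ∧ ∀ y < a, (phi i y).Dom) ↔
      ∃ w, check (Nat.pair i x) w = true := by
    intro i x
    constructor
    · rintro ⟨a, haA, hxa, hall⟩
      rw [hAg] at haA
      obtain ⟨n, rfl⟩ := haA
      obtain ⟨s, hs⟩ := exists_uniform_stage (Denumerable.ofNat Code i) (g n) hall
      refine ⟨Nat.pair n s, ?_⟩
      rw [hcheckdef]
      simp only [Nat.unpair_pair, Bool.and_eq_true, decide_eq_true_eq]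
      exact ⟨hxa, allb_iff.2 hs⟩
    · rintro ⟨w, hw⟩
      rw [hcheckdef] at hw
      simp only [Nat.unpair_pair, Bool.and_eq_true, decide_eq_true_eq] at hw
      refine ⟨g w.unpair.1, by rw [hAg]; exact ⟨w.unpair.1, rfl⟩, hw.1, fun y hy => ?_⟩
      obtain ⟨z, hz⟩ := Option.isSome_iff_exists.1 (allb_iff.1 hw.2 y hy)
      exact Part.dom_iff_mem.2 ⟨z, evaln_sound hz⟩
  -- pointwise behaviour
  have hmain : ∀ i x,
      ((∃ a ∈ A, x < a ∧ ∀ y < a, (phi i y).Dom) → phi (f i) x = phi i x) ∧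
      (¬ (∃ a ∈ A, x < a ∧ ∀ y < a, (phi i y).Dom) → ¬ (phi (f i) x).Dom) := by
    intro i x
    constructor
    · intro hP
      obtain ⟨w, hw⟩ := (hPiff i x).1 hP
      have hdom : (Nat.rfind fun w => Part.some (check (Nat.pair i x) w)).Dom :=
        Nat.rfind_dom.2 ⟨w, by simp [hw], fun {m} _ => trivial⟩
      rw [hfi]
      obtain ⟨w0, hw0⟩ := Part.dom_iff_mem.1 hdom
      rw [Part.eq_some_iff.2 hw0, Part.bind_some]
    · intro hP hdom
      rw [hfi] at hdom
      obtain ⟨z, hz⟩ := Part.dom_iff_mem.1 hdom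
      obtain ⟨w, hw, -⟩ := Part.mem_bind_iff.1 hz
      exact hP ((hPiff i x).2 ⟨w, by simpa using Nat.rfind_spec hw⟩)
  have hDom : ∀ i x, (phi (f i) x).Dom ↔ (∃ a ∈ A, x < a ∧ ∀ y < a, (phi i y).Dom) := by
    intro i x
    constructor
    · intro h; by_contra hP; exact (hmain i x).2 hP h
    · intro hP
      rw [(hmain i x).1 hP]
      obtain ⟨a, -, hxa, hall⟩ := hP
      exact hall x hxa
  have hExt : ∀ i, phi i ∈ SA A → phi (f i) = phi i := by
    intro i hi
    funext x
    rcases hi with ⟨h, hc, heq⟩ | hinit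
    · refine (hmain i x).1 ?_
      obtain ⟨a, haA, hxa⟩ := hAinf.exists_gt x
      exact ⟨a, haA, hxa, fun y _ => by rw [heq y]; trivial⟩
    · rcases hinit with hemp | ⟨a0, ha0A, hset⟩
      · have hx : ¬(phi i x).Dom := fun h =>
          (Set.eq_empty_iff_forall_notMem.1 hemp x) h
        have hP : ¬(∃ a ∈ A, x < a ∧ ∀ y < a, (phi i y).Dom) := by
          rintro ⟨a, -, hxa, hall⟩; exact hx (hall x hxa)
        rw [Part.eq_none_iff'.2 ((hmain i x).2 hP), Part.eq_none_iff'.2 hx]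
      · by_cases hx : x < a0
        · refine (hmain i x).1 ⟨a0, ha0A, hx, fun y hy => ?_⟩
          have hmem : y ∈ {m : ℕ | m < a0} := hy
          rw [← hset] at hmem; exact hmem
        · have hxd : ¬(phi i x).Dom := fun h => hx (by
            have hmem : x ∈ {x | (phi i x).Dom} := h
            rwa [hset] at hmem)
          have hP : ¬(∃ a ∈ A, x < a ∧ ∀ y < a, (phi i y).Dom) := by
            rintro ⟨a, -, hxa, hall⟩
            have ha0 : a0 ∈ {x | (phi i x).Dom} :=
              hall a0 (lt_of_le_of_lt (le_of_not_gt hx) hxa)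
            rw [hset] at ha0
            exact absurd ha0 (lt_irrefl a0)
          rw [Part.eq_none_iff'.2 ((hmain i x).2 hP), Part.eq_none_iff'.2 hxd]
  have hphi : ∀ j, Partrec (phi j) := fun j =>
    eval_part.comp (Computable.const _) Computable.id
  have hrange : Set.range (fun i => phi (f i)) = SA A := by
    apply Set.Subset.antisymm
    · rintro r ⟨i, rfl⟩
      simp only
      by_cases htot : ∀ y, (phi i y).Dom
      · have hPall : ∀ x, (∃ a ∈ A, x < a ∧ ∀ y < a, (phi i y).Dom) := fun x => by
          obtain ⟨a, haA, hxa⟩ := hAinf.exists_gt x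
          exact ⟨a, haA, hxa, fun y _ => htot y⟩
        refine Or.inl ⟨fun x => (phi i x).get (htot x), ?_, fun x => ?_⟩
        · exact (hphi i).of_eq fun x => (Part.some_get (htot x)).symm
        · rw [(hmain i x).1 (hPall x)]
          exact (Part.some_get (htot x)).symm
      · refine Or.inr ?_
        push_neg at htot
        have hm0 := Nat.find_spec htot
        have hmin : ∀ y < Nat.find htot, (phi i y).Dom := fun y hy =>
          not_not.1 (Nat.find_min htot hy)
        set T := {a | a ∈ A ∧ a ≤ Nat.find htot} with hTdef
        by_cases hT : T.Nonempty
        · have hbdd : BddAbove T := ⟨Nat.find htot, fun a ha => ha.2⟩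
          have hbT := Nat.sSup_mem hT hbdd
          refine Or.inr ⟨sSup T, hbT.1, ?_⟩
          ext x
          simp only [Set.mem_setOf_eq]
          constructor
          · intro hd
            obtain ⟨a, haA, hxa, hall⟩ := (hDom i x).1 hd
            have haT : a ∈ T := ⟨haA, by
              by_contra hgt
              push_neg at hgt
              exact hm0 (hall _ hgt)⟩
            exact lt_of_lt_of_le hxa (le_csSup hbdd haT)
          · intro hx
            exact (hDom i x).2
              ⟨sSup T, hbT.1, hx, fun y hy => hmin y (lt_of_lt_of_le hy hbT.2)⟩
        · refine Or.inl (Set.eq_empty_iff_forall_notMem.2 fun x hx => ?_)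
          obtain ⟨a, haA, hxa, hall⟩ := (hDom i x).1 hx
          refine hT ⟨a, haA, ?_⟩
          by_contra hgt
          push_neg at hgt
          exact hm0 (hall _ hgt)
    · intro r hr
      have key : ∀ j, phi j = r → r ∈ Set.range fun i => phi (f i) := by
        intro j hj
        exact ⟨j, by simp only; rw [hExt j (by rw [hj]; exact hr), hj]⟩
      rcases hr with ⟨h, hc, heq⟩ | hinit
      · have hpr : Partrec r := Partrec.of_eq hc fun x => (heq x).symm
        obtain ⟨c', hc'⟩ := exists_code.1 (Partrec.nat_iff.1 hpr)
        refine key (Encodable.encode c') ?_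
        show eval (Denumerable.ofNat Code (Encodable.encode c')) = r
        rw [Denumerable.ofNat_encode, hc']
      · rcases hinit with hemp | ⟨a0, ha0A, hset⟩
        · have hrnone : ∀ x, r x = Part.none := fun x =>
            Part.eq_none_iff'.2 fun h => (Set.eq_empty_iff_forall_notMem.1 hemp x) h
          have hpr : Partrec r := _root_.Partrec.none.of_eq fun x => (hrnone x).symm
          obtain ⟨c', hc'⟩ := exists_code.1 (Partrec.nat_iff.1 hpr)
          refine key (Encodable.encode c') ?_
          show eval (Denumerable.ofNat Code (Encodable.encode c')) = r
          rw [Denumerable.ofNat_encode, hc']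
        · set v : ℕ → ℕ := fun y => if hy : (r y).Dom then (r y).get hy else 0 with hvdef
          set l : List ℕ := (List.range a0).map v with hldef
          have hrl : ∀ x, r x = Part.ofOption l[x]? := by
            intro x
            by_cases hx : x < a0
            · have hx' : (r x).Dom := by
                have : x ∈ {m : ℕ | m < a0} := hx
                rw [← hset] at this; exact this
              have h1 : l[x]? = some (v x) := by
                rw [hldef, List.getElem?_map, List.getElem?_range hx, Option.map_some]
              rw [h1]
              have : v x = (r x).get hx' := dif_pos hx'
              rw [this]
              exact (Part.some_get hx').symm
            · have h1 : l[x]? = Option.none := by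
                apply List.getElem?_eq_none
                rw [hldef]
                simpa using le_of_not_gt hx
              rw [h1]
              refine Part.eq_none_iff'.2 fun hd => hx ?_
              have hmem : x ∈ {x | (r x).Dom} := hd
              rw [hset] at hmem; exact hmem
          have hcomp : Computable fun x : ℕ => l[x]? := by
            have h2 := (Primrec.list_getElem?.comp (Primrec.const l) Primrec.id).to_comp
            exact h2.of_eq fun x => rfl
          have hpr : Partrec r := (Computable.ofOption hcomp).of_eq fun x => (hrl x).symm
          obtain ⟨c', hc'⟩ := exists_code.1 (Partrec.nat_iff.1 hpr)
          refine key (Encodable.encode c') ?_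
          show eval (Denumerable.ofNat Code (Encodable.encode c')) = r
          rw [Denumerable.ofNat_encode, hc']
  have hgraph : ∀ i, pgraph (phi (f i)) ⊆ pgraph (phi i) := by
    intro i n hn
    obtain ⟨x, z, hxz, rfl⟩ := hn
    have hd : (phi (f i) x).Dom := by rw [hxz]; trivial
    have hP := (hDom i x).1 hd
    exact ⟨x, z, by rw [← (hmain i x).1 hP]; exact hxz, rfl⟩
  exact ⟨f, hfc, hmain, hrange, hExt, hgraph⟩
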